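/- arXiv:2308.08690 — 5 statements merged into one kernel-verified Lean document; each statement's English description precedes it below -/
import Mathlib

section
/- Let S ⊆ L be a set of links. The following are equivalent: (i) every set C ⊆ V with C ∩ R ≠ ∅ and R ∖ C ≠ ∅ satisfies |δ_{E∪S}(C)| ≥ 3; (ii) for every dangerous ring-cut C there exist vertices a ∈ C and b ∈ V(H) ∖ C that are connected in the graph (V, S). (This is the cut formulation of: a solution S is feasible for the Steiner Ring Augmentation Problem if and only if all dangerous ring-cuts are covered by S.) -/
open scoped Classical

/-- The edges of the ring (cycle) on vertex set `{0, …, n-1}`: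
`{i, i+1}` for `0 ≤ i ≤ n-2` together with `{n-1, 0}`. -/
def ringEdges (n : ℕ) : Finset (Sym2 ℕ) :=
  ((Finset.range (n - 1)).image fun i => s(i, i + 1)) ∪ {s(n - 1, 0)}

/-- An unordered pair has exactly one endpoint in `C`. -/
def CrossesCut (C : Set ℕ) (e : Sym2 ℕ) : Prop :=
  ∃ x y : ℕ, e = s(x, y) ∧ x ∈ C ∧ y ∉ C

/-- A ring-cut is an interval `{a, …, b}` with `1 ≤ a ≤ b ≤ n-1`. -/
def IsRingCut (n : ℕ) (C : Set ℕ) : Prop :=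
  ∃ a b : ℕ, 1 ≤ a ∧ a ≤ b ∧ b ≤ n - 1 ∧ C = Set.Icc a b

/-- `a` and `b` are connected by a walk whose edges are pairs in `S`. -/
def ConnectedIn (S : Finset (Sym2 ℕ)) (a b : ℕ) : Prop :=
  Relation.ReflTransGen (fun x y => s(x, y) ∈ S) a b

lemma crossesCut_pair {C : Set ℕ} {u v : ℕ} :
    CrossesCut C s(u, v) ↔ (u ∈ C ∧ v ∉ C) ∨ (v ∈ C ∧ u ∉ C) := by
  constructor
  · rintro ⟨x, y, he, hx, hy⟩
    rw [Sym2.eq_iff] at he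
    rcases he with ⟨rfl, rfl⟩ | ⟨rfl, rfl⟩
    · exact Or.inl ⟨hx, hy⟩
    · exact Or.inr ⟨hx, hy⟩
  · rintro (⟨h1, h2⟩ | ⟨h1, h2⟩)
    · exact ⟨u, v, rfl, h1, h2⟩
    · exact ⟨v, u, Sym2.eq_swap, h1, h2⟩

lemma cross_of_connected {S : Finset (Sym2 ℕ)} {C : Set ℕ} {x y : ℕ}
    (h : ConnectedIn S x y) (hx : x ∈ C) : y ∉ C → ∃ e ∈ S, CrossesCut C e := by
  induction h with
  | refl => exact fun hy => absurd hx hy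
  | @tail b c hab hbc ih =>
    intro hc
    by_cases hb : b ∈ C
    · exact ⟨s(b, c), hbc, b, c, rfl, hb, hc⟩
    · exact ih hb

lemma const_seg (C : Set ℕ) :
    ∀ d i, (∀ k, i ≤ k → k < i + d → ((k ∈ C) ↔ (k + 1 ∈ C))) → ((i ∈ C) ↔ (i + d ∈ C)) := by
  intro d
  induction d with
  | zero => intro i _; simp
  | succ m ih =>
    intro i h
    have h1 := ih i (fun k hk hk' => h k hk (by omega))
    have h2 := h (i + m) (by omega) (by omega)
    rw [h1]
    exact h2

lemma exists_boundary {C : Set ℕ} {i j : ℕ} (hij : i ≤ j) (hne : ¬((i ∈ C) ↔ (j ∈ C))) :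
    ∃ k, i ≤ k ∧ k < j ∧ ¬((k ∈ C) ↔ (k + 1 ∈ C)) := by
  by_contra hc
  push_neg at hc
  have h := const_seg C (j - i) i (fun k hk hk' => hc k hk (by omega))
  rw [show i + (j - i) = j from by omega] at h
  exact hne h

lemma two_boundaries {n : ℕ} (hn : 3 ≤ n) {C : Set ℕ} {u w : ℕ}
    (huw : u < w) (hw : w < n) (hne : ¬((u ∈ C) ↔ (w ∈ C))) :
    ∃ p q, p < q ∧ q < n ∧ ¬((p ∈ C) ↔ ((p + 1) % n ∈ C)) ∧
      ¬((q ∈ C) ↔ ((q + 1) % n ∈ C)) := by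
  obtain ⟨k1, hk1u, hk1w, hk1⟩ := exists_boundary (le_of_lt huw) hne
  have m1 : (k1 + 1) % n = k1 + 1 := Nat.mod_eq_of_lt (by omega)
  by_cases h1 : (w ∈ C) ↔ (n - 1 ∈ C)
  · by_cases h2 : (n - 1 ∈ C) ↔ (0 ∈ C)
    · -- boundary in [0, u)
      have h0u : ¬((0 : ℕ) ∈ C ↔ u ∈ C) := by tauto
      obtain ⟨k2, _, hk2u, hk2⟩ := exists_boundary (Nat.zero_le u) h0u
      refine ⟨k2, k1, by omega, by omega, ?_, ?_⟩
      · rw [Nat.mod_eq_of_lt (by omega)]; exact hk2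
      · rw [m1]; exact hk1
    · refine ⟨k1, n - 1, by omega, by omega, ?_, ?_⟩
      · rw [m1]; exact hk1
      · rw [show (n - 1 + 1) % n = 0 from by rw [show n - 1 + 1 = n from by omega, Nat.mod_self]]
        exact h2
  · obtain ⟨k2, hk2w, hk2n, hk2⟩ := exists_boundary (show w ≤ n - 1 from by omega) h1
    refine ⟨k1, k2, by omega, by omega, ?_, ?_⟩
    · rw [m1]; exact hk1
    · rw [Nat.mod_eq_of_lt (by omega)]; exact hk2

lemma edge_mem {n k : ℕ} (hn : 3 ≤ n) (hk : k < n) : s(k, (k + 1) % n) ∈ ringEdges n := by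
  rcases Nat.lt_or_ge (k + 1) n with h | h
  · rw [Nat.mod_eq_of_lt h]
    simp only [ringEdges, Finset.mem_union, Finset.mem_image, Finset.mem_range]
    exact Or.inl ⟨k, by omega, rfl⟩
  · have hk1 : k = n - 1 := by omega
    rw [show (k + 1) % n = 0 from by rw [show k + 1 = n from by omega, Nat.mod_self], hk1]
    simp [ringEdges]

lemma edge_inj {n k l : ℕ} (hn : 3 ≤ n) (hk : k < n) (hl : l < n)
    (h : s(k, (k + 1) % n) = s(l, (l + 1) % n)) : k = l := by
  rw [Sym2.eq_iff] at h
  rcases h with ⟨h1, _⟩ | ⟨h1, h2⟩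
  · exact h1
  · rcases Nat.lt_or_ge (l + 1) n with h3 | h3
    · rw [Nat.mod_eq_of_lt h3] at h1
      rcases Nat.lt_or_ge (k + 1) n with h4 | h4
      · rw [Nat.mod_eq_of_lt h4] at h2; omega
      · rw [show k + 1 = n from by omega, Nat.mod_self] at h2; omega
    · rw [show l + 1 = n from by omega, Nat.mod_self] at h1
      subst h1
      rw [Nat.mod_eq_of_lt (by omega)] at h2
      omega

lemma not_iff_cases {A B : Prop} (h : ¬(A ↔ B)) : (A ∧ ¬B) ∨ (B ∧ ¬A) := by tauto

/-- A solution `S ⊆ L` is feasible for SRAP (all cuts separating terminals have at least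
3 edges of `E ∪ S` crossing them) iff every dangerous ring-cut `C` has a vertex `a ∈ C`
and a vertex `b ∈ V(H) ∖ C` connected in `(V, S)`. -/
theorem stmt0 (n : ℕ) (hn : 3 ≤ n) (V : Finset ℕ) (hV : Finset.range n ⊆ V)
    (R : Finset ℕ) (hR : R ⊆ Finset.range n) (hr : 0 ∈ R)
    (L : Finset (Sym2 ℕ)) (hL : ∀ e ∈ L, ¬e.IsDiag ∧ ∀ x ∈ e, x ∈ V)
    (hEL : Disjoint (ringEdges n) L)
    (S : Finset (Sym2 ℕ)) (hS : S ⊆ L) :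
    (∀ C : Set ℕ, C ⊆ ↑V → (C ∩ ↑R).Nonempty → ((↑R : Set ℕ) \ C).Nonempty →
      3 ≤ ((ringEdges n ∪ S).filter fun e => CrossesCut C e).card) ↔
    (∀ C : Set ℕ, IsRingCut n C → (C ∩ ↑R).Nonempty →
      ∃ a ∈ C, ∃ b : ℕ, b < n ∧ b ∉ C ∧ ConnectedIn S a b) := by
  constructor
  · -- (i) → (ii)
    intro h C hcut hCR
    obtain ⟨a, b, ha1, hab, hbn, rfl⟩ := hcut
    by_contra hno
    push_neg at hno
    set D : Set ℕ := {v | ∃ c ∈ Set.Icc a b, ConnectedIn S c v} with hD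
    have hIccV : ∀ c ∈ Set.Icc a b, c ∈ V := by
      intro c hc
      rw [Set.mem_Icc] at hc
      exact hV (Finset.mem_range.mpr (by omega))
    have hDV : D ⊆ ↑V := by
      rintro v ⟨c, hc, hcv⟩
      induction hcv with
      | refl => exact hIccV c hc
      | @tail x y hcx hxy ih =>
        obtain ⟨_, h2⟩ := hL _ (hS hxy)
        exact h2 _ (Sym2.mem_mk_right _ _)
    have hDring : ∀ v, v < n → (v ∈ D ↔ v ∈ Set.Icc a b) := by
      intro v hv
      constructor
      · rintro ⟨c, hc, hcv⟩
        by_contra hvI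
        exact hno c hc v hv hvI hcv
      · intro hv'
        exact ⟨v, hv', Relation.ReflTransGen.refl⟩
    have hDR : (D ∩ ↑R).Nonempty := by
      obtain ⟨u, huI, huR⟩ := hCR
      exact ⟨u, ⟨u, huI, Relation.ReflTransGen.refl⟩, huR⟩
    have hRD : ((↑R : Set ℕ) \ D).Nonempty := by
      refine ⟨0, Finset.mem_coe.mpr hr, fun h0 => ?_⟩
      have := (hDring 0 (by omega)).mp h0
      rw [Set.mem_Icc] at this
      omega
    have key := h D hDV hDR hRD
    have hFsub : ((ringEdges n ∪ S).filter fun e => CrossesCut D e) ⊆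
        {s(a - 1, a), s(b, (b + 1) % n)} := by
      intro e he
      rw [Finset.mem_filter] at he
      obtain ⟨heU, hcr⟩ := he
      rw [Finset.mem_union] at heU
      rcases heU with heE | heS
      · simp only [ringEdges, Finset.mem_union, Finset.mem_image, Finset.mem_range,
          Finset.mem_singleton] at heE
        rcases heE with ⟨i, hi, rfl⟩ | rfl
        · rw [crossesCut_pair, hDring i (by omega), hDring (i + 1) (by omega),
            Set.mem_Icc, Set.mem_Icc] at hcr
          rcases hcr with ⟨h1, h2⟩ | ⟨h1, h2⟩
          · have hib : i = b := by omega
            have : s(i, i + 1) = s(b, (b + 1) % n) := by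
              rw [hib, Nat.mod_eq_of_lt (by omega)]
            rw [this]
            exact Finset.mem_insert_of_mem (Finset.mem_singleton_self _)
          · have : s(i, i + 1) = s(a - 1, a) := by
              rw [show i = a - 1 from by omega, show a - 1 + 1 = a from by omega]
            rw [this]
            exact Finset.mem_insert_self _ _
        · rw [crossesCut_pair, hDring (n - 1) (by omega), hDring 0 (by omega),
            Set.mem_Icc, Set.mem_Icc] at hcr
          rcases hcr with ⟨h1, h2⟩ | ⟨h1, h2⟩
          · have : s(n - 1, 0) = s(b, (b + 1) % n) := by
              rw [show b = n - 1 from by omega,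
                show (n - 1 + 1) % n = 0 from by rw [show n - 1 + 1 = n from by omega, Nat.mod_self]]
            rw [this]
            exact Finset.mem_insert_of_mem (Finset.mem_singleton_self _)
          · omega
      · exfalso
        obtain ⟨x, y, rfl, hx, hy⟩ := hcr
        obtain ⟨c, hc, hcx⟩ := hx
        exact hy ⟨c, hc, Relation.ReflTransGen.tail hcx heS⟩
    have : ((ringEdges n ∪ S).filter fun e => CrossesCut D e).card ≤ 2 :=
      le_trans (Finset.card_le_card hFsub)
        (le_trans (Finset.card_insert_le _ _) (by simp))
    omega
  · -- (ii) → (i)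
    intro h C hCV hCR hRD
    by_contra hlt
    push_neg at hlt
    set F := ((ringEdges n ∪ S).filter fun e => CrossesCut C e) with hF
    obtain ⟨u, huC, huR⟩ := hCR
    obtain ⟨w, hwR, hwC⟩ := hRD
    have hun : u < n := Finset.mem_range.mp (hR (Finset.mem_coe.mp huR))
    have hwn : w < n := Finset.mem_range.mp (hR (Finset.mem_coe.mp hwR))
    have hne : ¬((u ∈ C) ↔ (w ∈ C)) := fun hiff => hwC (hiff.mp huC)
    have hPQ : ∃ p q, p < q ∧ q < n ∧ ¬((p ∈ C) ↔ ((p + 1) % n ∈ C)) ∧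
        ¬((q ∈ C) ↔ ((q + 1) % n ∈ C)) := by
      rcases Nat.lt_or_ge u w with h' | h'
      · exact two_boundaries hn h' hwn hne
      · have hne2 : u ≠ w := fun hh => hne (by rw [hh])
        exact two_boundaries hn (by omega) hun (fun h2 => hne h2.symm)
    obtain ⟨p, q, hpq, hqn, hbp, hbq⟩ := hPQ
    have tri : ∀ e1 e2 e3 : Sym2 ℕ, e1 ∈ F → e2 ∈ F → e3 ∈ F →
        e1 ≠ e2 → e1 ≠ e3 → e2 ≠ e3 → False := by
      intro e1 e2 e3 h1 h2 h3 h12 h13 h23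
      have : 2 < F.card := Finset.two_lt_card_iff.mpr ⟨e1, e2, e3, h1, h2, h3, h12, h13, h23⟩
      omega
    have edgeF : ∀ k, k < n → ¬((k ∈ C) ↔ ((k + 1) % n ∈ C)) → s(k, (k + 1) % n) ∈ F := by
      intro k hk hb
      rw [Finset.mem_filter]
      exact ⟨Finset.mem_union_left _ (edge_mem hn hk), crossesCut_pair.mpr (not_iff_cases hb)⟩
    have hB_only : ∀ k, k < n → ¬((k ∈ C) ↔ ((k + 1) % n ∈ C)) → k = p ∨ k = q := by
      intro k hk hb
      by_contra hkk
      push_neg at hkk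
      exact tri _ _ _ (edgeF p (by omega) hbp) (edgeF q hqn hbq) (edgeF k hk hb)
        (fun hh => absurd (edge_inj hn (by omega) hqn hh) (by omega))
        (fun hh => absurd (edge_inj hn (by omega) hk hh) (by omega))
        (fun hh => absurd (edge_inj hn hqn hk hh) (by omega))
    have hpp : ¬((p ∈ C) ↔ (p + 1 ∈ C)) := by
      have := hbp; rwa [Nat.mod_eq_of_lt (by omega)] at this
    have sub1 : ∀ y, p + 1 ≤ y → y ≤ q → ¬((y ∈ C) ↔ ((0 : ℕ) ∈ C)) := by
      intro y hy1 hy2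
      have hyp1 : (y ∈ C) ↔ (p + 1 ∈ C) := by
        by_contra hne3
        obtain ⟨k, hk1, hk2, hk3⟩ := exists_boundary hy1 (fun hh => hne3 hh.symm)
        have := hB_only k (by omega) (by rwa [Nat.mod_eq_of_lt (by omega)])
        omega
      have h0p : ((0 : ℕ) ∈ C) ↔ (p ∈ C) := by
        by_contra hne3
        obtain ⟨k, hk1, hk2, hk3⟩ := exists_boundary (Nat.zero_le p) hne3
        have := hB_only k (by omega) (by rwa [Nat.mod_eq_of_lt (by omega)])
        omega
      exact fun hiff => hpp ((h0p.symm.trans hiff.symm).trans hyp1)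
    have sub2 : ∀ y, y < n → y ∉ Set.Icc (p + 1) q → ((y ∈ C) ↔ ((0 : ℕ) ∈ C)) := by
      intro y hyn hyI
      rw [Set.mem_Icc, not_and_or, not_le, not_le] at hyI
      rcases hyI with hyp | hyq
      · rcases Nat.eq_zero_or_pos y with rfl | hy0
        · exact Iff.rfl
        · by_contra hne3
          obtain ⟨k, hk1, hk2, hk3⟩ := exists_boundary (Nat.zero_le y) (fun hh => hne3 hh.symm)
          have := hB_only k (by omega) (by rwa [Nat.mod_eq_of_lt (by omega)])
          omega
      · have hyq1 : (y ∈ C) ↔ (q + 1 ∈ C) := by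
          by_contra hne3
          obtain ⟨k, hk1, hk2, hk3⟩ := exists_boundary (show q + 1 ≤ y from hyq)
            (fun hh => hne3 hh.symm)
          have := hB_only k (by omega) (by rwa [Nat.mod_eq_of_lt (by omega)])
          omega
        have hqq : ¬((q ∈ C) ↔ (q + 1 ∈ C)) := by
          have := hbq; rwa [Nat.mod_eq_of_lt (by omega)] at this
        have hq0 := sub1 q (by omega) le_rfl
        exact hyq1.trans ((not_iff.mp hqq).symm.trans (not_iff.mp hq0))
    have hrc : IsRingCut n (Set.Icc (p + 1) q) :=
      ⟨p + 1, q, by omega, by omega, by omega, rfl⟩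
    have final3 : ∀ e : Sym2 ℕ, e ∈ S → CrossesCut C e → False := by
      intro e heS hcrC
      have heF : e ∈ F := Finset.mem_filter.mpr ⟨Finset.mem_union_right _ heS, hcrC⟩
      have heNR : e ∉ ringEdges n := fun hh => Finset.disjoint_left.mp hEL hh (hS heS)
      exact tri _ _ _ (edgeF p (by omega) hbp) (edgeF q hqn hbq) heF
        (fun hh => absurd (edge_inj hn (by omega) hqn hh) (by omega))
        (fun hh => heNR (hh ▸ edge_mem hn (by omega)))
        (fun hh => heNR (hh ▸ edge_mem hn hqn))
    by_cases h0 : (0 : ℕ) ∈ C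
    · have hwI : w ∈ Set.Icc (p + 1) q := by
        by_contra hwI
        exact hwC ((sub2 w hwn hwI).mpr h0)
      obtain ⟨x, hxI, y, hyn, hyI, hconn⟩ := h _ hrc ⟨w, hwI, hwR⟩
      rw [Set.mem_Icc] at hxI
      have hxC : x ∉ C := fun hx => sub1 x hxI.1 hxI.2 ⟨fun _ => h0, fun _ => hx⟩
      have hyC : y ∈ C := (sub2 y hyn hyI).mpr h0
      obtain ⟨e, heS, hcr⟩ := cross_of_connected (C := Cᶜ) hconn hxC (fun hy => hy hyC)
      obtain ⟨x', y', rfl, hx', hy'⟩ := hcr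
      refine final3 _ heS (crossesCut_pair.mpr (Or.inr ⟨?_, hx'⟩))
      exact not_not.mp hy'
    · have huI : u ∈ Set.Icc (p + 1) q := by
        by_contra huI
        exact h0 ((sub2 u hun huI).mp huC)
      obtain ⟨x, hxI, y, hyn, hyI, hconn⟩ := h _ hrc ⟨u, huI, huR⟩
      rw [Set.mem_Icc] at hxI
      have hxC : x ∈ C := by
        have := sub1 x hxI.1 hxI.2
        tauto
      have hyC : y ∉ C := fun hy => h0 ((sub2 y hyn hyI).mp hy)
      obtain ⟨e, heS, hcr⟩ := cross_of_connected hconn hxC hyC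
      exact final3 _ heS hcr
end

section
/- Let R ⊆ V(H) be a terminal set and 𝒮 a finite set of hyper-links. Then every dangerous ring-cut is covered by some hyper-link of 𝒮 if and only if for every terminal r′ ∈ R ∖ {r} there is a path from r to r′ in the hyper-link intersection graph Γ(𝒮). -/
/-- A hyper-link `ℓ` covers a ring-cut `C` if `ℓ ∩ C ≠ ∅` and `ℓ ∖ C ≠ ∅`. -/
def Covers (ℓ : Finset ℕ) (C : Set ℕ) : Prop :=
  (∃ x ∈ ℓ, x ∈ C) ∧ (∃ x ∈ ℓ, x ∉ C)

/-- Two hyper-links are intersecting if they share a vertex, or each has a vertex strictly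
between two vertices of the other. -/
def Intersecting (ℓ ℓ' : Finset ℕ) : Prop :=
  (ℓ ∩ ℓ').Nonempty ∨
    ((∃ x ∈ ℓ, ∃ y₁ ∈ ℓ', ∃ y₂ ∈ ℓ', y₁ < x ∧ x < y₂) ∧
      (∃ y ∈ ℓ', ∃ x₁ ∈ ℓ, ∃ x₂ ∈ ℓ, x₁ < y ∧ y < x₂))

/-- There is a path from `u` to `v` in the hyper-link intersection graph `Γ(K)`:
a path from some hyper-link of `K` containing `u` to some hyper-link of `K` containing `v`. -/
def GammaPath (K : Finset (Finset ℕ)) (u v : ℕ) : Prop :=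
  ∃ ℓ₁ ∈ K, ∃ ℓ₂ ∈ K, u ∈ ℓ₁ ∧ v ∈ ℓ₂ ∧
    Relation.ReflTransGen (fun a b => a ∈ K ∧ b ∈ K ∧ Intersecting a b) ℓ₁ ℓ₂

/-- The adjacency relation of `Γ(K)` restricted to members of `K`. -/
def LinkRel (K : Finset (Finset ℕ)) : Finset ℕ → Finset ℕ → Prop :=
  fun a b => a ∈ K ∧ b ∈ K ∧ Intersecting a b

/-- A hyper-link is reachable if it is connected in `Γ(K)` to a hyper-link containing `0`. -/
def Reach (K : Finset (Finset ℕ)) (m : Finset ℕ) : Prop :=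
  ∃ ℓ₀, ℓ₀ ∈ K ∧ 0 ∈ ℓ₀ ∧ Relation.ReflTransGen (LinkRel K) ℓ₀ m

/-- The set of vertices covered by reachable hyper-links, together with the root `0`. -/
def SS (K : Finset (Finset ℕ)) (v : ℕ) : Prop :=
  v = 0 ∨ ∃ m, Reach K m ∧ v ∈ m

lemma reach_mem {K : Finset (Finset ℕ)} {m : Finset ℕ} (h : Reach K m) : m ∈ K := by
  obtain ⟨l, hl, h0, hr⟩ := h
  rcases Relation.ReflTransGen.cases_tail hr with h | ⟨c, _, hc⟩
  · exact h ▸ hl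
  · exact hc.2.1

lemma reach_tail {K : Finset (Finset ℕ)} {m l : Finset ℕ} (h : Reach K m) (h2 : LinkRel K m l) :
    Reach K l := by
  obtain ⟨l0, h0, h00, hr⟩ := h
  exact ⟨l0, h0, h00, hr.tail h2⟩

lemma lemB {K : Finset (Finset ℕ)} {l : Finset ℕ} {z : ℕ} (hl : l ∈ K) (h : ¬ Reach K l)
    (hz : z ∈ l) : ¬ SS K z := by
  rintro (rfl | ⟨m, hm, hzm⟩)
  · exact h ⟨l, hl, hz, Relation.ReflTransGen.refl⟩
  · exact h (reach_tail hm ⟨reach_mem hm, hl, Or.inl ⟨z, Finset.mem_inter.mpr ⟨hzm, hz⟩⟩⟩)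

/-- Key structural lemma: a hyper-link with two elements straddling a vertex of `SS K`
is itself reachable. -/
lemma lemA {K : Finset (Finset ℕ)} {l : Finset ℕ} {y x s : ℕ} (hl : l ∈ K) (hy : y ∈ l)
    (hx : x ∈ l) (hs : SS K s) (h1 : y < s) (h2 : s < x) : Reach K l := by
  by_contra hnr
  have hdis : ∀ z ∈ l, ¬ SS K z := fun z hz => lemB hl hnr hz
  have claim : ∀ m, Reach K m → ∀ q ∈ m, y < q → q < x → ∀ z ∈ m, y < z ∧ z < x := by
    intro m hm q hq hq1 hq2 z hz
    by_contra hcon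
    have hzS : SS K z := Or.inr ⟨m, hm, hz⟩
    have hzy : z ≠ y := fun h => hdis y hy (h ▸ hzS)
    have hzx : z ≠ x := fun h => hdis x hx (h ▸ hzS)
    have hz' : z < y ∨ x < z := by omega
    have hint : Intersecting m l := by
      right
      refine ⟨⟨q, hq, y, hy, x, hx, hq1, hq2⟩, ?_⟩
      rcases hz' with h | h
      · exact ⟨y, hy, z, hz, q, hq, h, hq1⟩
      · exact ⟨x, hx, q, hq, z, hz, hq2, h⟩
    exact hnr (reach_tail hm ⟨reach_mem hm, hl, hint⟩)
  have inv : ∀ m, Reach K m → ∃ z ∈ m, ¬(y < z ∧ z < x) := by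
    rintro m ⟨l0, hl0, h00, hrtg⟩
    induction hrtg with
    | refl => exact ⟨0, h00, by omega⟩
    | tail hab hbc ih =>
      rename_i mb mc
      by_contra hcon
      push_neg at hcon
      obtain ⟨z, hzb, hzn⟩ := ih
      obtain ⟨hbK, hcK, hint⟩ := hbc
      have hreachb : Reach K mb := ⟨l0, hl0, h00, hab⟩
      have hpin : ∃ p ∈ mb, y < p ∧ p < x := by
        rcases hint with hsh | ⟨⟨p, hp, q1, hq1, q2, hq2, hlt1, hlt2⟩, _⟩
        · obtain ⟨v, hv⟩ := hsh
          rw [Finset.mem_inter] at hv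
          exact ⟨v, hv.1, hcon v hv.2⟩
        · have h1' := hcon q1 hq1
          have h2' := hcon q2 hq2
          exact ⟨p, hp, by omega, by omega⟩
      obtain ⟨p, hp, hp1, hp2⟩ := hpin
      exact hzn (claim mb hreachb p hp hp1 hp2 z hzb)
  obtain ⟨ms, hms, hsms⟩ : ∃ m, Reach K m ∧ s ∈ m := by
    rcases hs with h0 | h
    · omega
    · exact h
  obtain ⟨z, hz, hzn⟩ := inv ms hms
  exact hzn (claim ms hms s hsms h1 h2 z hz)

/-- Every dangerous ring-cut is covered by some hyper-link of `𝒮` iff every terminal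
`r' ∈ R ∖ {r}` is connected to the root `r = 0` in the hyper-link intersection graph `Γ(𝒮)`. -/
theorem stmt1 (n : ℕ) (hn : 3 ≤ n) (R : Finset ℕ) (hR : R ⊆ Finset.range n) (hr : 0 ∈ R)
    (𝒮 : Finset (Finset ℕ)) (h𝒮 : ∀ ℓ ∈ 𝒮, ℓ ⊆ Finset.range n ∧ 2 ≤ ℓ.card) :
    (∀ C : Set ℕ, IsRingCut n C → (C ∩ ↑R).Nonempty → ∃ ℓ ∈ 𝒮, Covers ℓ C) ↔
      ∀ r' ∈ R, r' ≠ 0 → GammaPath 𝒮 0 r' := by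
  classical
  constructor
  · -- covering ⇒ connectivity
    intro hcov r' hr'R hr'0
    have hr'n : r' < n := Finset.mem_range.mp (hR hr'R)
    by_contra hgp
    have hno : ¬ SS 𝒮 r' := by
      rintro (h0 | ⟨m, hm, hr'm⟩)
      · exact hr'0 h0
      · obtain ⟨l0, hl0, h00, hrtg⟩ := hm
        exact hgp ⟨l0, hl0, m, reach_mem ⟨l0, hl0, h00, hrtg⟩, h00, hr'm, hrtg⟩
    set g := Nat.findGreatest (SS 𝒮) (r' - 1) with hgdef
    have hSS0 : SS 𝒮 0 := Or.inl rfl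
    have hg : SS 𝒮 g := Nat.findGreatest_spec (P := SS 𝒮) (Nat.zero_le _) hSS0
    have hgle : g ≤ r' - 1 := Nat.findGreatest_le _
    have hQr' : ∀ s, SS 𝒮 s → ¬(r' ≤ s ∧ s ≤ r') := by
      intro s hs h
      have : s = r' := le_antisymm h.2 h.1
      exact hno (this ▸ hs)
    have hr'n1 : r' ≤ n - 1 := by omega
    set b := Nat.findGreatest (fun k => ∀ s, SS 𝒮 s → ¬(r' ≤ s ∧ s ≤ k)) (n - 1) with hbdef
    have hQb : ∀ s, SS 𝒮 s → ¬(r' ≤ s ∧ s ≤ b) := Nat.findGreatest_spec (P := fun k => ∀ s, SS 𝒮 s → ¬(r' ≤ s ∧ s ≤ k)) hr'n1 hQr'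
    have hr'b : r' ≤ b := Nat.le_findGreatest (P := fun k => ∀ s, SS 𝒮 s → ¬(r' ≤ s ∧ s ≤ k)) hr'n1 hQr'
    have hbn : b ≤ n - 1 := Nat.findGreatest_le _
    have hcut : IsRingCut n (Set.Icc (g + 1) b) := ⟨g + 1, b, by omega, by omega, hbn, rfl⟩
    have hdang : (Set.Icc (g + 1) b ∩ ↑R).Nonempty :=
      ⟨r', ⟨Set.mem_Icc.mpr ⟨by omega, hr'b⟩, Finset.mem_coe.mpr hr'R⟩⟩
    obtain ⟨l, hlS, ⟨x, hxl, hxC⟩, ⟨y, hyl, hyC⟩⟩ := hcov _ hcut hdang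
    rw [Set.mem_Icc] at hxC
    rw [Set.mem_Icc] at hyC
    have hreach : Reach 𝒮 l := by
      by_contra hnr
      have hdisy : ¬ SS 𝒮 y := lemB hlS hnr hyl
      rcases (show y < g + 1 ∨ b < y by omega) with hcase | hcase
      · have hyg : y ≠ g := fun h => hdisy (h ▸ hg)
        exact hnr (lemA hlS hyl hxl hg (by omega) (by omega))
      · have hyn : y < n := Finset.mem_range.mp ((h𝒮 l hlS).1 hyl)
        have hnQ : ¬ ∀ s, SS 𝒮 s → ¬(r' ≤ s ∧ s ≤ b + 1) :=
          Nat.findGreatest_is_greatest (P := fun k => ∀ s, SS 𝒮 s → ¬(r' ≤ s ∧ s ≤ k))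
            (n := n - 1) (by omega) (by omega)
        have hEx : ∃ s, SS 𝒮 s ∧ r' ≤ s ∧ s ≤ b + 1 := by
          by_contra hcon
          exact hnQ fun s hs h => hcon ⟨s, hs, h⟩
        obtain ⟨s, hsS, hs1, hs2⟩ := hEx
        have hsb : s = b + 1 := by
          have := hQb s hsS
          omega
        have hys : y ≠ s := fun h => hdisy (h ▸ hsS)
        exact hnr (lemA hlS hxl hyl hsS (by omega) (by omega))
    have hxS : SS 𝒮 x := Or.inr ⟨l, hreach, hxl⟩
    rcases lt_trichotomy x r' with h | h | h
    · exact Nat.findGreatest_is_greatest (P := SS 𝒮) (show g < x by omega) (show x ≤ r' - 1 by omega) hxS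
    · exact hno (h ▸ hxS)
    · exact hQb x hxS ⟨by omega, hxC.2⟩
  · -- connectivity ⇒ covering
    intro hpath C hC hCR
    obtain ⟨aa, bb, ha1, habb, hbn, rfl⟩ := hC
    obtain ⟨t, htC, htR⟩ := hCR
    have htR' : t ∈ R := Finset.mem_coe.mp htR
    have htI := Set.mem_Icc.mp htC
    obtain ⟨l1, h1, l2, h2, h01, ht2, hrtg⟩ := hpath t htR' (by omega)
    have main : ∀ c, Relation.ReflTransGen (fun a b => a ∈ 𝒮 ∧ b ∈ 𝒮 ∧ Intersecting a b) l1 c →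
        (∃ ℓ ∈ 𝒮, Covers ℓ (Set.Icc aa bb)) ∨ (c ∈ 𝒮 ∧ ∃ z ∈ c, z ∉ Set.Icc aa bb) := by
      intro c hc
      induction hc with
      | refl =>
        refine Or.inr ⟨h1, 0, h01, fun h => ?_⟩
        rw [Set.mem_Icc] at h
        omega
      | tail hab hbc ih =>
        rename_i mb mc
        rcases ih with h | ⟨hbK, z, hzb, hzn⟩
        · exact Or.inl h
        · obtain ⟨hbK', hcK, hint⟩ := hbc
          by_cases hout : ∀ w ∈ mc, w ∈ Set.Icc aa bb
          · by_cases hbin : ∃ w ∈ mb, w ∈ Set.Icc aa bb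
            · obtain ⟨w, hw, hwI⟩ := hbin
              exact Or.inl ⟨mb, hbK', ⟨w, hw, hwI⟩, ⟨z, hzb, hzn⟩⟩
            · push_neg at hbin
              exfalso
              rcases hint with hsh | ⟨⟨p, hp, q1, hq1, q2, hq2, hl1, hl2⟩, _⟩
              · obtain ⟨v, hv⟩ := hsh
                rw [Finset.mem_inter] at hv
                exact hbin v hv.1 (hout v hv.2)
              · have hq1I := Set.mem_Icc.mp (hout q1 hq1)
                have hq2I := Set.mem_Icc.mp (hout q2 hq2)
                exact hbin p hp (Set.mem_Icc.mpr ⟨by omega, by omega⟩)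
          · push_neg at hout
            obtain ⟨w, hw, hwn⟩ := hout
            exact Or.inr ⟨hcK, w, hw, hwn⟩
    rcases main l2 hrtg with h | ⟨_, z, hz, hzn⟩
    · exact h
    · exact ⟨l2, h2, ⟨t, ht2, htC⟩, ⟨z, hz, hzn⟩⟩
end

section
/- Let K be a finite set of hyper-links and C a ring-cut. Then some hyper-link of K covers C if and only if there is a path in the hyper-link intersection graph Γ(K) from a hyper-link containing some vertex v ∈ C to a hyper-link containing some vertex w ∈ V(H) ∖ C. -/
/-- Some hyper-link of `K` covers the ring-cut `C` iff there is a path in `Γ(K)` from a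
hyper-link containing some `v ∈ C` to a hyper-link containing some `w ∈ V(H) ∖ C`. -/
theorem stmt2 (n : ℕ) (hn : 3 ≤ n) (K : Finset (Finset ℕ))
    (hK : ∀ ℓ ∈ K, ℓ ⊆ Finset.range n ∧ 2 ≤ ℓ.card)
    (C : Set ℕ) (hC : IsRingCut n C) :
    (∃ ℓ ∈ K, Covers ℓ C) ↔ ∃ v ∈ C, ∃ w : ℕ, w < n ∧ w ∉ C ∧ GammaPath K v w := by
  obtain ⟨a, b, ha, hab, hb, rfl⟩ := hC
  constructor
  · rintro ⟨ℓ, hℓ, ⟨v, hvℓ, hvC⟩, w, hwℓ, hwC⟩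
    exact ⟨v, hvC, w, Finset.mem_range.mp ((hK ℓ hℓ).1 hwℓ), hwC,
      ℓ, hℓ, ℓ, hℓ, hvℓ, hwℓ, Relation.ReflTransGen.refl⟩
  · rintro ⟨v, hvC, w, _, hwC, ℓ₁, h1, ℓ₂, h2, hv1, hw2, hpath⟩
    by_contra hno
    push_neg at hno
    -- if a link meets C and is not covering, it is contained in C
    have sub : ∀ ℓ ∈ K, (∃ x ∈ ℓ, x ∈ Set.Icc a b) → ∀ x ∈ ℓ, x ∈ Set.Icc a b := by
      intro ℓ hℓ hmeet x hx
      by_contra hxC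
      exact hno ℓ hℓ ⟨hmeet, x, hx, hxC⟩
    have key : ∀ ℓ, Relation.ReflTransGen
        (fun p q => p ∈ K ∧ q ∈ K ∧ Intersecting p q) ℓ₁ ℓ →
        ∀ x ∈ ℓ, x ∈ Set.Icc a b := by
      intro ℓ hℓ
      induction hℓ with
      | refl => exact sub ℓ₁ h1 ⟨v, hv1, hvC⟩
      | @tail p q hp hstep ih =>
        obtain ⟨hpK, hqK, hint⟩ := hstep
        refine sub q hqK ?_
        rcases hint with ⟨z, hz⟩ | ⟨_, y, hy, x₁, hx₁, x₂, hx₂, h₁, h₂⟩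
        · rw [Finset.mem_inter] at hz
          exact ⟨z, hz.2, ih z hz.1⟩
        · have hx₁C := ih x₁ hx₁
          have hx₂C := ih x₂ hx₂
          exact ⟨y, hy, le_of_lt (lt_of_le_of_lt hx₁C.1 h₁),
            le_of_lt (lt_of_lt_of_le h₂ hx₂C.2)⟩
    exact hwC (key ℓ₂ hpath w hw2)
end

section
/- Let X be a festoon of hyper-links and C a ring-cut. Then the number of hyper-links in X which cover C is at most 4. -/
open scoped Classical

/-- The interval `I_ℓ = {min ℓ, …, max ℓ}` of a hyper-link `ℓ`. -/
def hlInterval (ℓ : Finset ℕ) : Set ℕ :=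
  {x : ℕ | ∃ a ∈ ℓ, ∃ b ∈ ℓ, a ≤ x ∧ x ≤ b}

/-- Two hyper-links are crossing if their intervals intersect and neither interval
contains the other. -/
def CrossingHL (ℓ ℓ' : Finset ℕ) : Prop :=
  (hlInterval ℓ ∩ hlInterval ℓ').Nonempty ∧
    ¬hlInterval ℓ ⊆ hlInterval ℓ' ∧ ¬hlInterval ℓ' ⊆ hlInterval ℓ

/-- A festoon: a finite set of hyper-links admitting an ordering `ℓ₁, …, ℓ_p` such that
consecutive hyper-links cross and non-consecutive hyper-links have disjoint intervals. -/
def IsFestoon (X : Finset (Finset ℕ)) : Prop :=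
  ∃ l : List (Finset ℕ), l.Nodup ∧ (∀ ℓ : Finset ℕ, ℓ ∈ l ↔ ℓ ∈ X) ∧
    (∀ (i : ℕ) (h : i + 1 < l.length),
      CrossingHL (l.get ⟨i, Nat.lt_of_succ_lt h⟩) (l.get ⟨i + 1, h⟩)) ∧
    ∀ (i j : ℕ) (hi : i < l.length) (hj : j < l.length), (i + 2 ≤ j ∨ j + 2 ≤ i) →
      hlInterval (l.get ⟨i, hi⟩) ∩ hlInterval (l.get ⟨j, hj⟩) = ∅

lemma card_point_le_two (l : List (Finset ℕ))
    (hdisj : ∀ (i j : ℕ) (hi : i < l.length) (hj : j < l.length), (i + 2 ≤ j ∨ j + 2 ≤ i) →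
      hlInterval (l.get ⟨i, hi⟩) ∩ hlInterval (l.get ⟨j, hj⟩) = ∅)
    (X : Finset (Finset ℕ)) (hmem : ∀ ℓ, ℓ ∈ l ↔ ℓ ∈ X) (x : ℕ) :
    (X.filter fun ℓ => x ∈ hlInterval ℓ).card ≤ 2 := by
  classical
  set T : Finset ℕ := (Finset.range l.length).filter
    (fun i => x ∈ hlInterval (l.getD i ∅)) with hT
  have hsub : X.filter (fun ℓ => x ∈ hlInterval ℓ) ⊆ T.image (fun i => l.getD i ∅) := by
    intro ℓ hℓ
    simp only [Finset.mem_filter] at hℓ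
    obtain ⟨hℓX, hx⟩ := hℓ
    obtain ⟨i, hi⟩ := List.mem_iff_get.mp ((hmem ℓ).2 hℓX)
    refine Finset.mem_image.mpr ⟨i.1, ?_, ?_⟩
    · have : l.getD i.1 ∅ = ℓ := by rw [List.getD_eq_get _ _ i]; exact hi
      simp only [hT, Finset.mem_filter, Finset.mem_range]
      exact ⟨i.2, this ▸ hx⟩
    · rw [List.getD_eq_get _ _ i]; exact hi
  have hTcard : T.card ≤ 2 := by
    rcases T.eq_empty_or_nonempty with h | h
    · simp [h]
    · set m := T.min' h with hm
      have hmT : m ∈ T := T.min'_mem h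
      have hsub2 : T ⊆ {m, m + 1} := by
        intro i hiT
        have h1 : m ≤ i := T.min'_le i hiT
        have h2 : ¬ (m + 2 ≤ i) := by
          intro hge
          have hmlt : m < l.length := by
            have := Finset.mem_filter.mp hmT
            exact Finset.mem_range.mp this.1
          have hilt : i < l.length := by
            have := Finset.mem_filter.mp hiT
            exact Finset.mem_range.mp this.1
          have hd := hdisj m i hmlt hilt (Or.inl hge)
          have hxm : x ∈ hlInterval (l.get ⟨m, hmlt⟩) := by
            have := (Finset.mem_filter.mp hmT).2
            rwa [List.getD_eq_get _ _ ⟨m, hmlt⟩] at this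
          have hxi : x ∈ hlInterval (l.get ⟨i, hilt⟩) := by
            have := (Finset.mem_filter.mp hiT).2
            rwa [List.getD_eq_get _ _ ⟨i, hilt⟩] at this
          have : x ∈ hlInterval (l.get ⟨m, hmlt⟩) ∩ hlInterval (l.get ⟨i, hilt⟩) := ⟨hxm, hxi⟩
          rw [hd] at this
          exact this
        have : i = m ∨ i = m + 1 := by omega
        simp [Finset.mem_insert, Finset.mem_singleton]
        omega
      calc T.card ≤ ({m, m+1} : Finset ℕ).card := Finset.card_le_card hsub2
        _ ≤ 2 := Finset.card_insert_le _ _ |>.trans (by simp)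
  calc (X.filter fun ℓ => x ∈ hlInterval ℓ).card
      ≤ (T.image (fun i => l.getD i ∅)).card := Finset.card_le_card hsub
    _ ≤ T.card := Finset.card_image_le
    _ ≤ 2 := hTcard

/-- At most 4 hyper-links of a festoon cover any given ring-cut. -/
theorem stmt8 (n : ℕ) (hn : 3 ≤ n) (X : Finset (Finset ℕ))
    (hX : ∀ ℓ ∈ X, ℓ ⊆ Finset.range n ∧ 2 ≤ ℓ.card)
    (hfest : IsFestoon X) (C : Set ℕ) (hC : IsRingCut n C) :
    (X.filter fun ℓ => Covers ℓ C).card ≤ 4 := by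
  classical
  obtain ⟨a, b, _, _, _, hCeq⟩ := hC
  obtain ⟨l, _, hmem, _, hdisj⟩ := hfest
  have key : X.filter (fun ℓ => Covers ℓ C) ⊆
      (X.filter fun ℓ => a ∈ hlInterval ℓ) ∪ (X.filter fun ℓ => b ∈ hlInterval ℓ) := by
    intro ℓ hℓ
    simp only [Finset.mem_filter, Finset.mem_union] at hℓ ⊢
    obtain ⟨hℓX, ⟨u, hu, huC⟩, ⟨v, hv, hvC⟩⟩ := hℓ
    subst hCeq
    simp only [Set.mem_Icc, not_and, not_le] at huC hvC
    rcases lt_or_ge v a with hv' | hv'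
    · exact Or.inl ⟨hℓX, v, hv, u, hu, le_of_lt hv', huC.1⟩
    · exact Or.inr ⟨hℓX, u, hu, v, hv, huC.2, le_of_lt (hvC hv')⟩
  calc (X.filter fun ℓ => Covers ℓ C).card
      ≤ ((X.filter fun ℓ => a ∈ hlInterval ℓ) ∪ (X.filter fun ℓ => b ∈ hlInterval ℓ)).card :=
        Finset.card_le_card key
    _ ≤ (X.filter fun ℓ => a ∈ hlInterval ℓ).card + (X.filter fun ℓ => b ∈ hlInterval ℓ).card :=
        Finset.card_union_le _ _
    _ ≤ 2 + 2 := Nat.add_le_add (card_point_le_two l hdisj X hmem a)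
        (card_point_le_two l hdisj X hmem b)
    _ ≤ 4 := by norm_num
end

section
/- Every finite set S of hyper-links can be partitioned into festoons X₁,…,X_m such that the family of festoon intervals {I_{X_1},…,I_{X_m}} is laminar. -/
/-- The festoon interval `I_X`: the interval from the smallest to the largest vertex
appearing in a hyper-link of `X`. -/
def festoonInterval (X : Finset (Finset ℕ)) : Set ℕ :=
  hlInterval (X.sup id)

namespace Stmt9Aux

noncomputable def LL (ℓ : Finset ℕ) : ℕ := sInf (ℓ : Set ℕ)
noncomputable def RR (ℓ : Finset ℕ) : ℕ := sSup (ℓ : Set ℕ)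

lemma LL_mem {ℓ : Finset ℕ} (h : ℓ.Nonempty) : LL ℓ ∈ ℓ := by
  have := Nat.sInf_mem (s := (ℓ : Set ℕ)) (Finset.coe_nonempty.mpr h)
  exact_mod_cast this

lemma RR_mem {ℓ : Finset ℕ} (h : ℓ.Nonempty) : RR ℓ ∈ ℓ := by
  have := Nat.sSup_mem (s := (ℓ : Set ℕ)) (Finset.coe_nonempty.mpr h)
    (ℓ.finite_toSet.bddAbove)
  exact_mod_cast this

lemma LL_le {ℓ : Finset ℕ} {x : ℕ} (hx : x ∈ ℓ) : LL ℓ ≤ x :=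
  Nat.sInf_le (by exact_mod_cast hx)

lemma le_RR {ℓ : Finset ℕ} {x : ℕ} (hx : x ∈ ℓ) : x ≤ RR ℓ :=
  le_csSup (ℓ.finite_toSet.bddAbove) (by exact_mod_cast hx)

lemma LL_le_RR {ℓ : Finset ℕ} (h : ℓ.Nonempty) : LL ℓ ≤ RR ℓ :=
  LL_le (RR_mem h)

lemma hl_eq {ℓ : Finset ℕ} (h : ℓ.Nonempty) :
    hlInterval ℓ = Set.Icc (LL ℓ) (RR ℓ) := by
  ext x
  constructor
  · rintro ⟨a, ha, b, hb, h1, h2⟩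
    exact ⟨le_trans (LL_le ha) h1, le_trans h2 (le_RR hb)⟩
  · rintro ⟨h1, h2⟩
    exact ⟨LL ℓ, LL_mem h, RR ℓ, RR_mem h, h1, h2⟩

lemma crossing_of {ℓ ℓ' : Finset ℕ} (h : ℓ.Nonempty) (h' : ℓ'.Nonempty)
    (h1 : LL ℓ' ≤ RR ℓ) (h2 : LL ℓ < LL ℓ') (h3 : RR ℓ < RR ℓ') :
    CrossingHL ℓ ℓ' := by
  rw [CrossingHL, hl_eq h, hl_eq h']
  refine ⟨⟨LL ℓ', ⟨le_of_lt h2, h1⟩, ⟨le_refl _, LL_le_RR h'⟩⟩, ?_, ?_⟩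
  · intro hsub
    have := hsub ⟨le_refl _, LL_le_RR h⟩
    exact absurd this.1 (by omega)
  · intro hsub
    have := hsub ⟨LL_le_RR h', le_refl _⟩
    exact absurd this.2 (by omega)



structure Chain (S : Finset (Finset ℕ)) (a : ℕ) (p : ℕ) (c : ℕ → Finset ℕ) : Prop where
  pos : 0 < p
  mem : ∀ i < p, c i ∈ S
  inj : ∀ i < p, ∀ j < p, c i = c j → i = j
  cross : ∀ i, i + 1 < p → CrossingHL (c i) (c (i+1))
  rmono : ∀ i, i + 1 < p → RR (c i) < RR (c (i+1))
  lle : ∀ i, i + 1 < p → LL (c (i+1)) ≤ RR (c i)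
  sep : ∀ i, i + 2 < p → RR (c i) < LL (c (i+2))
  head : LL (c 0) = a
  proc : ∀ ℓ ∈ S, (∀ i < p, c i ≠ ℓ) →
      LL ℓ ≤ (if p = 1 then a else RR (c (p-2))) → RR ℓ ≤ RR (c (p-1))

lemma Chain.rmono' {S a p c} (hc : Chain S a p c) {i j : ℕ} (hij : i ≤ j) (hj : j < p) :
    RR (c i) ≤ RR (c j) := by
  induction j with
  | zero => simp_all
  | succ k ih =>
    rcases Nat.lt_or_ge i (k+1) with h | h
    · exact le_trans (ih (by omega) (by omega)) (le_of_lt (hc.rmono k hj))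
    · have : i = k + 1 := by omega
      subst this; exact le_refl _

lemma Chain.extend {S a p c} (hc : Chain S a p c) (hne : ∀ ℓ ∈ S, ℓ.Nonempty)
    {ℓn : Finset ℕ} (hℓS : ℓn ∈ S) (hnotin : ∀ i < p, c i ≠ ℓn)
    (h1 : LL ℓn ≤ RR (c (p-1))) (h2 : RR (c (p-1)) < RR ℓn)
    (hmax : ∀ ℓ' ∈ S, (∀ i < p, c i ≠ ℓ') → LL ℓ' ≤ RR (c (p-1)) →
      RR (c (p-1)) < RR ℓ' → RR ℓ' ≤ RR ℓn) :
    Chain S a (p+1) (fun i => if i = p then ℓn else c i) := by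
  have hpos := hc.pos
  -- LL ℓn is bigger than the "prev" threshold
  have hLLn : LL ℓn > (if p = 1 then a else RR (c (p-2))) := by
    by_contra h
    push_neg at h
    have := hc.proc ℓn hℓS hnotin h
    omega
  have hLLlast : LL (c (p-1)) < LL ℓn := by
    rcases Nat.eq_or_lt_of_le hpos with hp1 | hp2
    · have : p = 1 := hp1.symm
      simp only [this] at hLLn ⊢
      simpa [hc.head] using hLLn
    · have hp : p - 2 + 1 = p - 1 := by omega
      have := hc.lle (p-2) (by omega)
      rw [hp] at this
      simp only [if_neg (by omega : ¬ p = 1)] at hLLn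
      omega
  constructor
  · omega
  · intro i hi
    by_cases h : i = p
    · simpa [h] using hℓS
    · have : i < p := by omega
      simpa [h] using hc.mem i this
  · intro i hi j hj hij
    by_cases h : i = p <;> by_cases h' : j = p
    · omega
    · simp only [h, if_pos, if_neg h'] at hij
      exact absurd hij.symm (hnotin j (by omega))
    · simp only [h', if_pos, if_neg h] at hij
      exact absurd hij (hnotin i (by omega))
    · simp only [if_neg h, if_neg h'] at hij
      exact hc.inj i (by omega) j (by omega) hij
  · intro i hi
    by_cases h : i + 1 = p
    · have hip : i = p - 1 := by omega
      have hin : ¬ i = p := by omega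
      simp only [if_neg hin, h, if_pos]
      rw [hip]
      exact crossing_of (hne _ (hc.mem (p-1) (by omega))) (hne _ hℓS) h1 hLLlast h2
    · have : i + 1 < p := by omega
      simp only [if_neg (by omega : ¬ i = p), if_neg h]
      exact hc.cross i this
  · intro i hi
    by_cases h : i + 1 = p
    · have hip : i = p - 1 := by omega
      simp only [if_neg (by omega : ¬ i = p), h, if_pos]
      rw [hip]; exact h2
    · simp only [if_neg (by omega : ¬ i = p), if_neg h]
      exact hc.rmono i (by omega)
  · intro i hi
    by_cases h : i + 1 = p
    · have hip : i = p - 1 := by omega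
      simp only [if_neg (by omega : ¬ i = p), h, if_pos]
      rw [hip]; exact h1
    · simp only [if_neg (by omega : ¬ i = p), if_neg h]
      exact hc.lle i (by omega)
  · intro i hi
    by_cases h : i + 2 = p
    · have hp2 : ¬ p = 1 := by omega
      have hip : i = p - 2 := by omega
      simp only [if_neg (by omega : ¬ i = p), h, if_pos]
      rw [hip]
      simp only [if_neg hp2] at hLLn
      omega
    · simp only [if_neg (by omega : ¬ i = p), if_neg h]
      exact hc.sep i (by omega)
  · simp only [if_neg (by omega : ¬ 0 = p)]
    exact hc.head
  · intro ℓ hℓ hni hle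
    have hne1 : ¬ p + 1 = 1 := by omega
    simp only [if_neg hne1, Nat.add_sub_cancel, if_pos] at hle ⊢
    have hp1 : ¬ (p + 1 - 2) = p := by omega
    simp only [if_neg hp1] at hle
    have hprev : p + 1 - 2 = p - 1 := by omega
    rw [hprev] at hle
    have hniold : ∀ i < p, c i ≠ ℓ := by
      intro i hi
      have := hni i (by omega)
      simpa [if_neg (by omega : ¬ i = p)] using this
    rcases Nat.lt_or_ge (RR (c (p-1))) (RR ℓ) with h | h
    · exact hmax ℓ hℓ hniold hle h
    · omega

lemma exists_terminal (S : Finset (Finset ℕ)) (hSne : S.Nonempty)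
    (hne : ∀ ℓ ∈ S, ℓ.Nonempty) :
    ∃ a p c, Chain S a p c ∧ (∀ ℓ ∈ S, a ≤ LL ℓ) ∧
      ∀ ℓ ∈ S, (∀ i < p, c i ≠ ℓ) → LL ℓ ≤ RR (c (p-1)) → RR ℓ ≤ RR (c (p-1)) := by
  classical
  obtain ⟨ℓa, hℓa, hamin⟩ := Finset.exists_min_image S LL hSne
  set a := LL ℓa with ha
  -- head: max RR among links with LL = a
  have hTne : (S.filter (fun ℓ => LL ℓ = a)).Nonempty := ⟨ℓa, by simp [hℓa, ha]⟩
  obtain ⟨ℓ0, hℓ0, hℓ0max⟩ := Finset.exists_max_image _ RR hTne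
  rw [Finset.mem_filter] at hℓ0
  have base : Chain S a 1 (fun _ => ℓ0) := by
    constructor
    · omega
    · intro i _; exact hℓ0.1
    · intro i hi j hj _; omega
    · intro i hi; omega
    · intro i hi; omega
    · intro i hi; omega
    · intro i hi; omega
    · exact hℓ0.2
    · intro ℓ hℓ _ hle
      simp only [if_pos rfl] at hle
      have : LL ℓ = a := le_antisymm hle (hamin ℓ hℓ)
      exact hℓ0max ℓ (Finset.mem_filter.mpr ⟨hℓ, this⟩)
  refine ⟨a, ?_⟩
  by_contra hno
  push_neg at hno
  -- build arbitrarily long chains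
  have grow : ∀ k, ∃ c, Chain S a (k+1) c := by
    intro k
    induction k with
    | zero => exact ⟨_, base⟩
    | succ m ih =>
      obtain ⟨c, hc⟩ := ih
      obtain ⟨ℓ, hℓS, hni, hle, hgt⟩ := hno (m+1) c hc hamin
      set C := S.filter (fun ℓ' => (∀ i < m+1, c i ≠ ℓ') ∧ LL ℓ' ≤ RR (c m) ∧
        RR (c m) < RR ℓ') with hC
      have hCne : C.Nonempty := ⟨ℓ, by
        rw [hC, Finset.mem_filter]
        exact ⟨hℓS, hni, by simpa using hle, by simpa using hgt⟩⟩
      obtain ⟨ℓn, hℓn, hℓnmax⟩ := Finset.exists_max_image C RR hCne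
      rw [hC, Finset.mem_filter] at hℓn
      obtain ⟨hℓnS, hℓnni, hℓn1, hℓn2⟩ := hℓn
      refine ⟨_, hc.extend hne hℓnS hℓnni (by simpa using hℓn1) (by simpa using hℓn2) ?_⟩
      intro ℓ' hℓ'S hni' h1' h2'
      exact hℓnmax ℓ' (by
        rw [hC, Finset.mem_filter]
        exact ⟨hℓ'S, hni', by simpa using h1', by simpa using h2'⟩)
  obtain ⟨c, hc⟩ := grow S.card
  have hinj : Set.InjOn c ↑(Finset.range (S.card + 1)) := by
    intro i hi j hj hij
    simp only [Finset.coe_range, Set.mem_Iio] at hi hj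
    exact hc.inj i hi j hj hij
  have hcard := Finset.card_le_card_of_injOn c
    (fun i hi => hc.mem i (by simpa using hi)) hinj
  simp only [Finset.card_range] at hcard
  omega

lemma mem_sup_iff {X : Finset (Finset ℕ)} {x : ℕ} :
    x ∈ X.sup id ↔ ∃ ℓ ∈ X, x ∈ ℓ := by
  simp [Finset.mem_sup]

lemma exists_good_festoon (S : Finset (Finset ℕ)) (hSne : S.Nonempty)
    (hne : ∀ ℓ ∈ S, ℓ.Nonempty) :
    ∃ (X : Finset (Finset ℕ)) (a b : ℕ), a ≤ b ∧ X ⊆ S ∧ X.Nonempty ∧ IsFestoon X ∧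
      festoonInterval X = Set.Icc a b ∧
      ∀ ℓ ∈ S, ℓ ∉ X →
        hlInterval ℓ ⊆ Set.Icc a b ∨ hlInterval ℓ ∩ Set.Icc a b = ∅ := by
  classical
  obtain ⟨a, p, c, hc, hamin, hterm⟩ := exists_terminal S hSne hne
  have hpos := hc.pos
  set b := RR (c (p-1)) with hb
  set X : Finset (Finset ℕ) := (Finset.range p).image c with hX
  have hmemX : ∀ ℓ, ℓ ∈ X ↔ ∃ i < p, c i = ℓ := by
    intro ℓ; simp [hX, Finset.mem_image]
  have hXS : X ⊆ S := by
    intro ℓ hℓ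
    obtain ⟨i, hi, rfl⟩ := (hmemX ℓ).mp hℓ
    exact hc.mem i hi
  have hc0 : c 0 ∈ S := hc.mem 0 hpos
  have hab : a ≤ b := by
    rw [← hc.head, hb]
    calc LL (c 0) ≤ RR (c 0) := LL_le_RR (hne _ hc0)
    _ ≤ RR (c (p-1)) := hc.rmono' (by omega) (by omega)
  have hRRle : ∀ i < p, RR (c i) ≤ b := fun i hi => hc.rmono' (by omega) (by omega)
  have hfI : festoonInterval X = Set.Icc a b := by
    ext x
    constructor
    · rintro ⟨u, hu, v, hv, hux, hxv⟩
      rw [mem_sup_iff] at hu hv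
      obtain ⟨ℓ1, hℓ1, hu⟩ := hu
      obtain ⟨ℓ2, hℓ2, hv⟩ := hv
      obtain ⟨i, hi, rfl⟩ := (hmemX ℓ1).mp hℓ1
      obtain ⟨j, hj, rfl⟩ := (hmemX ℓ2).mp hℓ2
      constructor
      · calc a ≤ LL (c i) := hamin _ (hc.mem i hi)
          _ ≤ u := LL_le hu
          _ ≤ x := hux
      · calc x ≤ v := hxv
          _ ≤ RR (c j) := le_RR hv
          _ ≤ b := hRRle j hj
    · rintro ⟨h1, h2⟩
      refine ⟨a, ?_, b, ?_, h1, h2⟩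
      · rw [mem_sup_iff]
        exact ⟨c 0, (hmemX _).mpr ⟨0, hpos, rfl⟩, by rw [← hc.head]; exact LL_mem (hne _ hc0)⟩
      · rw [mem_sup_iff]
        exact ⟨c (p-1), (hmemX _).mpr ⟨p-1, by omega, rfl⟩, RR_mem (hne _ (hc.mem _ (by omega)))⟩
  refine ⟨X, a, b, hab, hXS, ⟨c 0, (hmemX _).mpr ⟨0, hpos, rfl⟩⟩, ?_, hfI, ?_⟩
  · -- IsFestoon
    refine ⟨(List.range p).map c, ?_, ?_, ?_, ?_⟩
    · refine List.Nodup.map_on ?_ List.nodup_range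
      intro i hi j hj hij
      exact hc.inj i (List.mem_range.mp hi) j (List.mem_range.mp hj) hij
    · intro ℓ
      rw [hmemX]
      simp [List.mem_map, List.mem_range]
    · intro i h
      simp only [List.length_map, List.length_range] at h
      have g1 : ((List.range p).map c).get ⟨i, by simp; omega⟩ = c i := by
        simp
      have g2 : ((List.range p).map c).get ⟨i+1, by simp; omega⟩ = c (i+1) := by
        simp
      rw [g1, g2]
      exact hc.cross i h
    · intro i j hi hj hij
      simp only [List.length_map, List.length_range] at hi hj
      have g1 : ((List.range p).map c).get ⟨i, by simp; omega⟩ = c i := by simp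
      have g2 : ((List.range p).map c).get ⟨j, by simp; omega⟩ = c j := by simp
      rw [g1, g2]
      have key : ∀ i' j', i' + 2 ≤ j' → j' < p →
          hlInterval (c i') ∩ hlInterval (c j') = ∅ := by
        intro i' j' h2 hj'
        have hsep := hc.sep (j'-2) (by omega)
        have hjj : j' - 2 + 2 = j' := by omega
        rw [hjj] at hsep
        have hmono : RR (c i') ≤ RR (c (j'-2)) := hc.rmono' (by omega) (by omega)
        rw [hl_eq (hne _ (hc.mem i' (by omega))), hl_eq (hne _ (hc.mem j' (by omega)))]
        ext x
        simp only [Set.mem_inter_iff, Set.mem_Icc, Set.mem_empty_iff_false, iff_false]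
        omega
      rcases hij with h | h
      · exact key i j h hj
      · rw [Set.inter_comm]; exact key j i h hi
  · -- laminar-ish property of other links
    intro ℓ hℓS hℓX
    have hni : ∀ i < p, c i ≠ ℓ := by
      intro i hi heq
      exact hℓX ((hmemX ℓ).mpr ⟨i, hi, heq⟩)
    rcases le_or_gt (RR ℓ) b with h | h
    · left
      rw [hl_eq (hne _ hℓS)]
      intro x hx
      exact ⟨le_trans (hamin _ hℓS) hx.1, le_trans hx.2 h⟩
    · right
      have hLL : ¬ LL ℓ ≤ b := fun hle => absurd (hterm ℓ hℓS hni hle) (by omega)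
      rw [hl_eq (hne _ hℓS)]
      ext x
      simp only [Set.mem_inter_iff, Set.mem_Icc, Set.mem_empty_iff_false, iff_false]
      omega

lemma hl_empty : hlInterval ∅ = ∅ := by
  ext x; simp [hlInterval]

lemma festoon_laminar {Y : Finset (Finset ℕ)} (hY : IsFestoon Y)
    (hYne : ∀ ℓ ∈ Y, ℓ.Nonempty) {a b : ℕ} (hab : a ≤ b)
    (hcl : ∀ ℓ ∈ Y, hlInterval ℓ ⊆ Set.Icc a b ∨ hlInterval ℓ ∩ Set.Icc a b = ∅) :
    festoonInterval Y ⊆ Set.Icc a b ∨ festoonInterval Y ∩ Set.Icc a b = ∅ := by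
  classical
  rcases Finset.eq_empty_or_nonempty Y with rfl | hYne'
  · right
    rw [festoonInterval]
    simp [hl_empty]
  obtain ⟨l, hnd, hmem, hcross, _⟩ := hY
  -- trichotomy for each link
  have tri : ∀ ℓ ∈ Y, (hlInterval ℓ ⊆ Set.Icc a b) ∨ RR ℓ < a ∨ b < LL ℓ := by
    intro ℓ hℓ
    rcases hcl ℓ hℓ with h | h
    · exact Or.inl h
    · rw [hl_eq (hYne ℓ hℓ)] at h
      have := Set.eq_empty_iff_forall_notMem.mp h
      by_contra hcon
      push_neg at hcon
      obtain ⟨_, h2, h3⟩ := hcon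
      have hLR := LL_le_RR (hYne ℓ hℓ)
      rcases le_or_gt (LL ℓ) a with h4 | h4
      · exact this a ⟨⟨h4, by omega⟩, le_refl a, hab⟩
      · exact this (LL ℓ) ⟨⟨le_refl _, hLR⟩, by omega, by omega⟩
  -- class function: 0 = inside, 1 = left, 2 = right
  have hmemY : ∀ i (hi : i < l.length), l.get ⟨i, hi⟩ ∈ Y := by
    intro i hi
    exact (hmem _).mp (l.get_mem _)
  -- exclusivity: a link's class determines where all its points lie
  have pt : ∀ ℓ ∈ Y, ∀ x ∈ hlInterval ℓ,
      ((hlInterval ℓ ⊆ Set.Icc a b) → a ≤ x ∧ x ≤ b) ∧ (RR ℓ < a → x < a) ∧ (b < LL ℓ → b < x) := by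
    intro ℓ hℓ x hx
    refine ⟨fun h => h hx, fun h => ?_, fun h => ?_⟩
    · rw [hl_eq (hYne ℓ hℓ)] at hx; simp only [Set.mem_Icc] at hx; omega
    · rw [hl_eq (hYne ℓ hℓ)] at hx; simp only [Set.mem_Icc] at hx; omega
  -- propagation: consecutive links same class
  have step : ∀ i (h : i + 1 < l.length),
      ((hlInterval (l.get ⟨i, by omega⟩) ⊆ Set.Icc a b ↔ hlInterval (l.get ⟨i+1, h⟩) ⊆ Set.Icc a b) ∧
       (RR (l.get ⟨i, by omega⟩) < a ↔ RR (l.get ⟨i+1, h⟩) < a) ∧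
       (b < LL (l.get ⟨i, by omega⟩) ↔ b < LL (l.get ⟨i+1, h⟩))) := by
    intro i h
    obtain ⟨⟨x, hx1, hx2⟩, _, _⟩ := hcross i h
    set ℓ1 := l.get ⟨i, by omega⟩
    set ℓ2 := l.get ⟨i+1, h⟩
    have hℓ1 : ℓ1 ∈ Y := hmemY i (by omega)
    have hℓ2 : ℓ2 ∈ Y := hmemY (i+1) h
    have p1 := pt ℓ1 hℓ1 x hx1
    have p2 := pt ℓ2 hℓ2 x hx2
    have t1 := tri ℓ1 hℓ1
    have t2 := tri ℓ2 hℓ2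
    constructor
    · constructor
      · intro hc1
        rcases t2 with h' | h' | h'
        · exact h'
        · have := p1.1 hc1; have := p2.2.1 h'; omega
        · have := p1.1 hc1; have := p2.2.2 h'; omega
      · intro hc2
        rcases t1 with h' | h' | h'
        · exact h'
        · have := p2.1 hc2; have := p1.2.1 h'; omega
        · have := p2.1 hc2; have := p1.2.2 h'; omega
    constructor
    · constructor
      · intro hc1
        rcases t2 with h' | h' | h'
        · have := p2.1 h'; have := p1.2.1 hc1; omega
        · exact h'
        · have := p1.2.1 hc1; have := p2.2.2 h'; omega
      · intro hc2
        rcases t1 with h' | h' | h'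
        · have := p1.1 h'; have := p2.2.1 hc2; omega
        · exact h'
        · have := p2.2.1 hc2; have := p1.2.2 h'; omega
    · constructor
      · intro hc1
        rcases t2 with h' | h' | h'
        · have := p2.1 h'; have := p1.2.2 hc1; omega
        · have := p1.2.2 hc1; have := p2.2.1 h'; omega
        · exact h'
      · intro hc2
        rcases t1 with h' | h' | h'
        · have := p1.1 h'; have := p2.2.2 hc2; omega
        · have := p2.2.2 hc2; have := p1.2.1 h'; omega
        · exact h'
  -- propagate to all indices
  have hlne : l ≠ [] := by
    intro h
    obtain ⟨ℓ, hℓ⟩ := hYne'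
    have := (hmem ℓ).mpr hℓ
    simp [h] at this
  have hlen : 0 < l.length := List.length_pos_iff.mpr hlne
  have all : ∀ i (hi : i < l.length),
      ((hlInterval (l.get ⟨0, hlen⟩) ⊆ Set.Icc a b ↔ hlInterval (l.get ⟨i, hi⟩) ⊆ Set.Icc a b) ∧
       (RR (l.get ⟨0, hlen⟩) < a ↔ RR (l.get ⟨i, hi⟩) < a) ∧
       (b < LL (l.get ⟨0, hlen⟩) ↔ b < LL (l.get ⟨i, hi⟩))) := by
    intro i
    induction i with
    | zero => intro hi; exact ⟨Iff.rfl, Iff.rfl, Iff.rfl⟩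
    | succ k ih =>
      intro hi
      have hk := ih (by omega)
      have hs := step k hi
      exact ⟨hk.1.trans hs.1, hk.2.1.trans hs.2.1, hk.2.2.trans hs.2.2⟩
  -- lift to all members of Y
  have allY : (∀ ℓ ∈ Y, hlInterval ℓ ⊆ Set.Icc a b) ∨ (∀ ℓ ∈ Y, RR ℓ < a) ∨
      (∀ ℓ ∈ Y, b < LL ℓ) := by
    have memidx : ∀ ℓ ∈ Y, ∃ i, ∃ hi : i < l.length, l.get ⟨i, hi⟩ = ℓ := by
      intro ℓ hℓ
      have := (hmem ℓ).mpr hℓ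
      obtain ⟨⟨i, hi⟩, h⟩ := List.mem_iff_get.mp this
      exact ⟨i, hi, h⟩
    rcases tri _ (hmemY 0 hlen) with h | h | h
    · left
      intro ℓ hℓ
      obtain ⟨i, hi, rfl⟩ := memidx ℓ hℓ
      exact ((all i hi).1).mp h
    · right; left
      intro ℓ hℓ
      obtain ⟨i, hi, rfl⟩ := memidx ℓ hℓ
      exact ((all i hi).2.1).mp h
    · right; right
      intro ℓ hℓ
      obtain ⟨i, hi, rfl⟩ := memidx ℓ hℓ
      exact ((all i hi).2.2).mp h
  rcases allY with h | h | h
  · left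
    rintro x ⟨u, hu, v, hv, hux, hxv⟩
    rw [mem_sup_iff] at hu hv
    obtain ⟨ℓ1, hℓ1, hu⟩ := hu
    obtain ⟨ℓ2, hℓ2, hv⟩ := hv
    have h1 := h ℓ1 hℓ1 ⟨u, hu, u, hu, le_refl u, le_refl u⟩
    have h2 := h ℓ2 hℓ2 ⟨v, hv, v, hv, le_refl v, le_refl v⟩
    exact ⟨le_trans h1.1 hux, le_trans hxv h2.2⟩
  · right
    ext x
    simp only [Set.mem_inter_iff, Set.mem_empty_iff_false, iff_false, not_and]
    rintro ⟨u, hu, v, hv, hux, hxv⟩ hx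
    rw [mem_sup_iff] at hv
    obtain ⟨ℓ2, hℓ2, hv⟩ := hv
    have := h ℓ2 hℓ2
    have := le_RR hv
    have := hx.1
    omega
  · right
    ext x
    simp only [Set.mem_inter_iff, Set.mem_empty_iff_false, iff_false, not_and]
    rintro ⟨u, hu, v, hv, hux, hxv⟩ hx
    rw [mem_sup_iff] at hu
    obtain ⟨ℓ1, hℓ1, hu⟩ := hu
    have := h ℓ1 hℓ1
    have := LL_le hu
    have := hx.2
    omega

lemma main_aux : ∀ (k : ℕ) (S : Finset (Finset ℕ)), S.card ≤ k →
    (∀ ℓ ∈ S, ℓ.Nonempty) →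
    ∃ 𝒳 : Finset (Finset (Finset ℕ)),
      (∀ X ∈ 𝒳, X ⊆ S ∧ IsFestoon X) ∧
      (∀ ℓ ∈ S, ∃! X : Finset (Finset ℕ), X ∈ 𝒳 ∧ ℓ ∈ X) ∧
      ∀ X ∈ 𝒳, ∀ Y ∈ 𝒳,
        festoonInterval X ⊆ festoonInterval Y ∨ festoonInterval Y ⊆ festoonInterval X ∨
          festoonInterval X ∩ festoonInterval Y = ∅ := by
  intro k
  induction k with
  | zero =>
    intro S hcard _
    have : S = ∅ := Finset.card_eq_zero.mp (by omega)
    subst this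
    exact ⟨∅, by simp, by simp, by simp⟩
  | succ m ih =>
    intro S hcard hne
    rcases Finset.eq_empty_or_nonempty S with rfl | hSne
    · exact ⟨∅, by simp, by simp, by simp⟩
    obtain ⟨X, a, b, hab, hXS, hXne, hXfest, hXfI, hXcl⟩ := exists_good_festoon S hSne hne
    set S' := S \ X with hS'
    have hS'card : S'.card ≤ m := by
      have hss : S' ⊂ S := by
        rw [hS']
        obtain ⟨ℓ, hℓ⟩ := hXne
        exact Finset.sdiff_ssubset hXS ⟨ℓ, hℓ⟩
      have := Finset.card_lt_card hss
      omega
    have hS'ne : ∀ ℓ ∈ S', ℓ.Nonempty := fun ℓ hℓ => hne ℓ (Finset.mem_sdiff.mp hℓ).1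
    obtain ⟨𝒳', h𝒳'1, h𝒳'2, h𝒳'3⟩ := ih S' hS'card hS'ne
    refine ⟨insert X 𝒳', ?_, ?_, ?_⟩
    · intro Z hZ
      rcases Finset.mem_insert.mp hZ with rfl | hZ
      · exact ⟨hXS, hXfest⟩
      · exact ⟨le_trans (h𝒳'1 Z hZ).1 (Finset.sdiff_subset), (h𝒳'1 Z hZ).2⟩
    · intro ℓ hℓ
      by_cases hℓX : ℓ ∈ X
      · refine ⟨X, ⟨Finset.mem_insert_self _ _, hℓX⟩, ?_⟩
        rintro Z ⟨hZ, hℓZ⟩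
        rcases Finset.mem_insert.mp hZ with rfl | hZ
        · rfl
        · have := (h𝒳'1 Z hZ).1 hℓZ
          rw [hS', Finset.mem_sdiff] at this
          exact absurd hℓX this.2
      · have hℓS' : ℓ ∈ S' := Finset.mem_sdiff.mpr ⟨hℓ, hℓX⟩
        obtain ⟨Y, ⟨hY𝒳, hℓY⟩, hYuniq⟩ := h𝒳'2 ℓ hℓS'
        refine ⟨Y, ⟨Finset.mem_insert_of_mem hY𝒳, hℓY⟩, ?_⟩
        rintro Z ⟨hZ, hℓZ⟩
        rcases Finset.mem_insert.mp hZ with rfl | hZ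
        · exact absurd hℓZ hℓX
        · exact hYuniq Z ⟨hZ, hℓZ⟩
    · -- laminarity
      have key : ∀ Y ∈ 𝒳', festoonInterval Y ⊆ Set.Icc a b ∨
          festoonInterval Y ∩ Set.Icc a b = ∅ := by
        intro Y hY
        have hYS' := (h𝒳'1 Y hY).1
        refine festoon_laminar (h𝒳'1 Y hY).2 (fun ℓ hℓ => hS'ne ℓ (hYS' hℓ)) hab ?_
        intro ℓ hℓ
        have := hYS' hℓ
        rw [hS', Finset.mem_sdiff] at this
        exact hXcl ℓ this.1 this.2
      intro Z hZ W hW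
      have lamX : ∀ Y ∈ 𝒳',
          (festoonInterval X ⊆ festoonInterval Y ∨ festoonInterval Y ⊆ festoonInterval X ∨
            festoonInterval X ∩ festoonInterval Y = ∅) := by
        intro Y hY
        rcases key Y hY with h | h
        · right; left; rw [hXfI]; exact h
        · right; right; rw [hXfI, Set.inter_comm]; exact h
      rcases Finset.mem_insert.mp hZ with hZe | hZm
      · rcases Finset.mem_insert.mp hW with hWe | hWm
        · left; rw [hZe, hWe]
        · rw [hZe]; exact lamX W hWm
      · rcases Finset.mem_insert.mp hW with hWe | hWm
        · rw [hWe]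
          rcases lamX Z hZm with h | h | h
          · right; left; exact h
          · left; exact h
          · right; right; rw [Set.inter_comm]; exact h
        · exact h𝒳'3 Z hZm W hWm

end Stmt9Aux

/-- Every finite set of hyper-links can be partitioned into festoons whose festoon
intervals form a laminar family. -/
theorem stmt9 (n : ℕ) (hn : 3 ≤ n) (S : Finset (Finset ℕ))
    (hS : ∀ ℓ ∈ S, ℓ ⊆ Finset.range n ∧ 2 ≤ ℓ.card) :
    ∃ 𝒳 : Finset (Finset (Finset ℕ)),
      (∀ X ∈ 𝒳, X ⊆ S ∧ IsFestoon X) ∧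
      (∀ ℓ ∈ S, ∃! X : Finset (Finset ℕ), X ∈ 𝒳 ∧ ℓ ∈ X) ∧
      ∀ X ∈ 𝒳, ∀ Y ∈ 𝒳,
        festoonInterval X ⊆ festoonInterval Y ∨ festoonInterval Y ⊆ festoonInterval X ∨
          festoonInterval X ∩ festoonInterval Y = ∅ := by
  exact Stmt9Aux.main_aux S.card S le_rfl
    (fun ℓ hℓ => Finset.card_pos.mp (by have := (hS ℓ hℓ).2; omega))
end
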